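/- Let p, q ∈ (1,∞) and r ∈ (1/2,∞) with 1/p + 1/q = 1/r, and let ϱ ∈ (1,∞). Let f = (f_n)_{n≥0} and g = (g_n)_{n≥0} be martingales with respect to the same filtration and let λ > 0. If the weak-type jump estimate ‖ N_λ(f,g) ‖_{L^r} ≤ C_{p,q} λ^{−1} ‖f‖_{L^p} ‖g‖_{L^q} holds for all λ > 0 and all such pairs of martingales, where N_λ(f,g) is the supremum over m ∈ ℕ and increasing sequences n_0 < ⋯ < n_m of card{ k : |Π_{n_{k−1},n_k}(f,g)| ≥ λ }, then the weak-type variational estimate ‖ V^ϱ(f,g) ‖_{L^{r,∞}} ≤ C'_{p,q,ϱ} ‖f‖_{L^p} ‖g‖_{L^q} holds, where V^ϱ(f,g) := sup over m ∈ ℕ and n_0 < n_1 < ⋯ < n_m of ( Σ_{k=1}^m |Π_{n_{k−1},n_k}(f,g)|^ϱ )^{1/ϱ}. -/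

import Mathlib

open MeasureTheory ENNReal

noncomputable section

/-- The truncated martingale paraproduct `Π_{n,n'}(f,g) = ∑_{n < i < j ≤ n'} df_i dg_j`. -/
def truncPP {Ω : Type} (f g : ℕ → Ω → ℝ) (n n' : ℕ) (ω : Ω) : ℝ :=
  ∑ j ∈ Finset.Ioc n n', ∑ i ∈ Finset.Ioo n j,
    (f i ω - f (i - 1) ω) * (g j ω - g (j - 1) ω)

/-- `‖f‖_{L^p} = sup_n ‖f_n‖_{L^p}` for a discrete-time process. -/
def martLp {Ω : Type} [MeasurableSpace Ω] (μ : Measure Ω) (f : ℕ → Ω → ℝ) (p : ℝ) : ℝ≥0∞ :=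
  ⨆ n, eLpNorm (f n) (ENNReal.ofReal p) μ

/-- The λ-jump counting function `N_λ(f,g)` of the truncated paraproducts. -/
def jumpPP {Ω : Type} (lam : ℝ) (f g : ℕ → Ω → ℝ) (ω : Ω) : ℝ≥0∞ :=
  ⨆ (m : ℕ) (n : Fin (m + 1) → ℕ) (_ : StrictMono n),
    ((Finset.univ.filter
      fun k : Fin m => lam ≤ |truncPP f g (n k.castSucc) (n k.succ) ω|).card : ℝ≥0∞)

/-- The ϱ-variation `V^ϱ(f,g)` of the truncated paraproducts. -/
def varPP {Ω : Type} (ϱ : ℝ) (f g : ℕ → Ω → ℝ) (ω : Ω) : ℝ≥0∞ :=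
  ⨆ (m : ℕ) (n : Fin (m + 1) → ℕ) (_ : StrictMono n),
    (∑ k : Fin m, (ENNReal.ofReal |truncPP f g (n k.castSucc) (n k.succ) ω|) ^ ϱ) ^ (1 / ϱ)

/-! ### Auxiliary lemmas -/

lemma measurable_truncPP {Ω : Type} [MeasurableSpace Ω] {f g : ℕ → Ω → ℝ}
    (hf : ∀ i, Measurable (f i)) (hg : ∀ i, Measurable (g i)) (n n' : ℕ) :
    Measurable (truncPP f g n n') := by
  unfold truncPP
  apply Finset.measurable_sum
  intro j _
  apply Finset.measurable_sum
  intro i _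
  exact ((hf i).sub (hf (i - 1))).mul ((hg j).sub (hg (j - 1)))

lemma measurable_jumpPP {Ω : Type} [MeasurableSpace Ω] {f g : ℕ → Ω → ℝ}
    (hf : ∀ i, Measurable (f i)) (hg : ∀ i, Measurable (g i)) (lam : ℝ) :
    Measurable (jumpPP lam f g) := by
  unfold jumpPP
  apply Measurable.iSup; intro m
  apply Measurable.iSup; intro n
  apply Measurable.iSup; intro _
  have h : (fun ω => ((Finset.univ.filter
        fun k : Fin m => lam ≤ |truncPP f g (n k.castSucc) (n k.succ) ω|).card : ℝ≥0∞))
      = fun ω => ∑ k : Fin m,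
          (if lam ≤ |truncPP f g (n k.castSucc) (n k.succ) ω| then (1 : ℝ≥0∞) else 0) := by
    funext ω
    rw [Finset.card_filter]
    push_cast
    rfl
  rw [h]
  apply Finset.measurable_sum
  intro k _
  refine Measurable.ite ?_ measurable_const measurable_const
  exact measurableSet_le measurable_const (measurable_truncPP hf hg _ _).abs

/-- Pointwise dyadic bin bound: if `0 ≤ x < α/2` then `x^ϱ` is at most the (unique)
bin weight, hence at most the sum of all bin weights. -/
lemma bin_bound {α x ϱ : ℝ} (hϱ : 0 < ϱ) (hα : 0 < α) (hx : 0 ≤ x) (hx2 : x < α / 2 ^ (0 + 1)) :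
    ENNReal.ofReal x ^ ϱ ≤
      ∑' l : ℕ, (if α / 2 ^ (l + 1 + 1) ≤ x ∧ x < α / 2 ^ (l + 1)
        then ENNReal.ofReal (α / 2 ^ (l + 1)) ^ ϱ else 0) := by
  rcases eq_or_lt_of_le hx with hx0 | hx0
  · rw [← hx0, ENNReal.ofReal_zero, ENNReal.zero_rpow_of_pos hϱ]
    exact zero_le
  · have hex : ∃ l : ℕ, α / 2 ^ (l + 1 + 1) ≤ x := by
      obtain ⟨n, hn⟩ := pow_unbounded_of_one_lt (α / x) (y := (2 : ℝ)) one_lt_two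
      refine ⟨n, ?_⟩
      rw [div_le_iff₀ (by positivity)]
      rw [div_lt_iff₀ hx0] at hn
      calc α ≤ 2 ^ n * x := hn.le
        _ = x * 2 ^ n := by ring
        _ ≤ x * 2 ^ (n + 1 + 1) := by
            gcongr
            · exact one_le_two
            · omega
    set l0 := Nat.find hex with hl0
    have h1 : α / 2 ^ (l0 + 1 + 1) ≤ x := Nat.find_spec hex
    have h2 : x < α / 2 ^ (l0 + 1) := by
      rcases Nat.eq_zero_or_pos l0 with h | h
      · rw [h]; exact hx2
      · obtain ⟨m, hm⟩ := Nat.exists_eq_succ_of_ne_zero h.ne'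
        have hmin := Nat.find_min hex (m := m) (by omega)
        push_neg at hmin
        rw [hm]
        exact hmin
    calc ENNReal.ofReal x ^ ϱ ≤ ENNReal.ofReal (α / 2 ^ (l0 + 1)) ^ ϱ :=
          ENNReal.rpow_le_rpow (ENNReal.ofReal_le_ofReal h2.le) hϱ.le
      _ = (if α / 2 ^ (l0 + 1 + 1) ≤ x ∧ x < α / 2 ^ (l0 + 1)
            then ENNReal.ofReal (α / 2 ^ (l0 + 1)) ^ ϱ else 0) := (if_pos ⟨h1, h2⟩).symm
      _ ≤ _ := ENNReal.le_tsum l0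

lemma two_rpow_add (x y : ℝ) : (2 : ℝ≥0∞) ^ x * (2 : ℝ≥0∞) ^ y = (2 : ℝ≥0∞) ^ (x + y) :=
  (ENNReal.rpow_add x y (by norm_num) (by norm_num)).symm

lemma two_rpow_pow (x : ℝ) (l : ℕ) :
    ((2 : ℝ≥0∞) ^ x) ^ l = (2 : ℝ≥0∞) ^ (x * l) := by
  rw [← ENNReal.rpow_natCast ((2:ℝ≥0∞) ^ x) l, ← ENNReal.rpow_mul]

lemma two_pow_eq_rpow (l : ℕ) : ((2 : ℝ≥0∞) ^ l) = (2 : ℝ≥0∞) ^ (l : ℝ) :=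
  (ENNReal.rpow_natCast 2 l).symm

lemma rpow_root_mul {r : ℝ} (hr : 0 < r) (D C A B : ℝ≥0∞) :
    (D * (C ^ r * A ^ r * B ^ r)) ^ (1 / r) = D ^ (1 / r) * C * A * B := by
  rw [ENNReal.mul_rpow_of_nonneg _ _ (one_div_nonneg.mpr hr.le),
    ENNReal.mul_rpow_of_nonneg _ _ (one_div_nonneg.mpr hr.le),
    ENNReal.mul_rpow_of_nonneg _ _ (one_div_nonneg.mpr hr.le),
    ← ENNReal.rpow_mul, ← ENNReal.rpow_mul, ← ENNReal.rpow_mul,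
    mul_one_div_cancel hr.ne', ENNReal.rpow_one, ENNReal.rpow_one, ENNReal.rpow_one]
  ring

theorem jump_estimate_implies_weak_variational_estimate
    (p q r ϱ : ℝ) (hp : 1 < p) (hq : 1 < q) (hr : 1 / 2 < r)
    (hpqr : 1 / p + 1 / q = 1 / r) (hϱ : 1 < ϱ) (C : ℝ≥0∞) (hC : C < ∞)
    (hjump : ∀ (Ω : Type) [m0 : MeasurableSpace Ω] (μ : Measure Ω), IsProbabilityMeasure μ →
      ∀ (𝓕 : Filtration ℕ m0) (f g : ℕ → Ω → ℝ),
        Martingale f 𝓕 μ → Martingale g 𝓕 μ → ∀ lam : ℝ, 0 < lam →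
        (∫⁻ ω, jumpPP lam f g ω ^ r ∂μ) ^ (1 / r) ≤
          C * (ENNReal.ofReal lam)⁻¹ * martLp μ f p * martLp μ g q) :
    ∃ C' : ℝ≥0∞, C' < ∞ ∧
      ∀ (Ω : Type) [m0 : MeasurableSpace Ω] (μ : Measure Ω), IsProbabilityMeasure μ →
      ∀ (𝓕 : Filtration ℕ m0) (f g : ℕ → Ω → ℝ),
        Martingale f 𝓕 μ → Martingale g 𝓕 μ →
        (⨆ (α : ℝ) (_ : 0 < α),
            ENNReal.ofReal α ^ r * μ {ω | ENNReal.ofReal α < varPP ϱ f g ω}) ^ (1 / r) ≤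
          C' * martLp μ f p * martLp μ g q := by
  have hr0 : (0 : ℝ) < r := lt_trans (by norm_num) hr
  have hϱ0 : (0 : ℝ) < ϱ := lt_trans one_pos hϱ
  set s : ℝ := (ϱ - 1) / 2 with hs_def
  have hs : 0 < s := by rw [hs_def]; linarith
  set ρ : ℝ≥0∞ := (2 : ℝ≥0∞) ^ (-s) with hρ_def
  have hρ1 : ρ < 1 := by
    rw [hρ_def, ENNReal.rpow_neg, ENNReal.inv_lt_one]
    exact ENNReal.one_lt_rpow (by norm_num) hs
  set c : ℝ≥0∞ := (1 - ρ) / 2 with hc_def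
  have h1ρ0 : (1 : ℝ≥0∞) - ρ ≠ 0 := (tsub_pos_of_lt hρ1).ne'
  have h1ρtop : (1 : ℝ≥0∞) - ρ ≠ ∞ :=
    (tsub_le_self.trans_lt (lt_top_iff_ne_top.mpr one_ne_top)).ne
  have h2c : 2 * c = 1 - ρ := by
    rw [hc_def, ENNReal.mul_div_cancel' (by norm_num) (by norm_num)]
  have h2c0 : (2 : ℝ≥0∞) * c ≠ 0 := by rw [h2c]; exact h1ρ0
  have h2ctop : (2 : ℝ≥0∞) * c ≠ ∞ := by rw [h2c]; exact h1ρtop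
  set T : ℝ≥0∞ := (2 : ℝ≥0∞) ^ (s + 1) with hT_def
  have hT0 : T ≠ 0 := by
    rw [hT_def]; exact (ENNReal.rpow_pos (by norm_num) (by norm_num)).ne'
  have hTtop : T ≠ ∞ := by
    rw [hT_def]; exact (ENNReal.rpow_lt_top_of_nonneg (by linarith) (by norm_num)).ne
  set K : ℕ → ℝ≥0∞ := fun l => 2 * c * T ^ l with hK_def
  have hK0 : ∀ l, K l ≠ 0 := fun l => mul_ne_zero h2c0 (pow_ne_zero l hT0)
  have hKtop : ∀ l, K l ≠ ∞ := fun l => ENNReal.mul_ne_top h2ctop (ENNReal.pow_ne_top hTtop)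
  set ρr : ℝ≥0∞ := ρ ^ r with hρr_def
  have hρr1 : ρr < 1 := ENNReal.rpow_lt_one hρ1 hr0
  have h2cr0 : ((2 : ℝ≥0∞) * c) ^ r ≠ 0 :=
    (ENNReal.rpow_pos (pos_iff_ne_zero.mpr h2c0) h2ctop).ne'
  have h2crtop : ((2 : ℝ≥0∞) * c) ^ r ≠ ∞ :=
    (ENNReal.rpow_lt_top_of_nonneg hr0.le h2ctop).ne
  set D : ℝ≥0∞ := (2 : ℝ≥0∞) ^ (r : ℝ) * ((2 * c) ^ r)⁻¹ * (1 - ρr)⁻¹ with hD_def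
  have hD : D < ∞ := by
    rw [hD_def]
    refine ENNReal.mul_lt_top (ENNReal.mul_lt_top ?_ ?_) ?_
    · exact ENNReal.rpow_lt_top_of_nonneg hr0.le (by norm_num)
    · rw [ENNReal.inv_lt_top]
      exact pos_iff_ne_zero.mpr h2cr0
    · rw [ENNReal.inv_lt_top]
      exact tsub_pos_of_lt hρr1
  refine ⟨D ^ (1 / r) * C, ?_, ?_⟩
  · exact ENNReal.mul_lt_top
      (ENNReal.rpow_lt_top_of_nonneg (one_div_nonneg.mpr hr0.le) hD.ne) hC
  intro Ω m0 μ hμ 𝓕 f g hf hg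
  have hfm : ∀ i, Measurable (f i) := fun i =>
    ((hf.stronglyAdapted i).mono (𝓕.le i)).measurable
  have hgm : ∀ i, Measurable (g i) := fun i =>
    ((hg.stronglyAdapted i).mono (𝓕.le i)).measurable
  set A : ℝ≥0∞ := martLp μ f p with hA
  set B : ℝ≥0∞ := martLp μ g q with hB
  have hsup : (⨆ (α : ℝ) (_ : 0 < α),
      ENNReal.ofReal α ^ r * μ {ω | ENNReal.ofReal α < varPP ϱ f g ω}) ≤
      D * (C ^ r * A ^ r * B ^ r) := by
    refine iSup_le fun α => iSup_le fun hα => ?_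
    set lam : ℕ → ℝ := fun l => α / 2 ^ (l + 1) with hlam_def
    have hlam_pos : ∀ l, 0 < lam l := fun l => by
      rw [hlam_def]; positivity
    set a : ℝ≥0∞ := ENNReal.ofReal α with ha_def
    have ha0 : a ≠ 0 := by
      rw [ha_def]; simpa using hα
    have hatop : a ≠ ∞ := ENNReal.ofReal_ne_top
    have hlam_eq : ∀ l, ENNReal.ofReal (lam l) = a * ((2 : ℝ≥0∞) ^ (l + 1))⁻¹ := by
      intro l
      rw [hlam_def]
      simp only []
      rw [ENNReal.ofReal_div_of_pos (by positivity), ENNReal.ofReal_pow (by norm_num)]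
      norm_num [div_eq_mul_inv]
      rfl
    set E : ℕ → Set Ω := fun l => {ω | K l ≤ jumpPP (lam l) f g ω} with hE_def
    -- Claim A : superlevel set of the variation is inside the union of jump events
    have hsub : {ω | a < varPP ϱ f g ω} ⊆ ⋃ l, E l := by
      intro ω hω
      by_contra hnot
      simp only [Set.mem_iUnion, not_exists, hE_def, Set.mem_setOf_eq, not_le] at hnot
      simp only [Set.mem_setOf_eq, varPP, lt_iSup_iff] at hω
      obtain ⟨m, n, hn, hlt⟩ := hω
      set P : Fin m → ℝ := fun k => truncPP f g (n k.castSucc) (n k.succ) ω with hP_def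
      have hS : a ^ ϱ < ∑ k : Fin m, ENNReal.ofReal |P k| ^ ϱ := by
        have h := ENNReal.rpow_lt_rpow hlt hϱ0
        rwa [← ENNReal.rpow_mul, one_div_mul_cancel hϱ0.ne', ENNReal.rpow_one] at h
      have hNle : ∀ lam' : ℝ,
          ((Finset.univ.filter fun k : Fin m => lam' ≤ |P k|).card : ℝ≥0∞) ≤
            jumpPP lam' f g ω := by
        intro lam'
        exact le_iSup_of_le m (le_iSup_of_le n (le_iSup_of_le hn le_rfl))
      -- all paraproducts are below `lam 0`
      have hka : ∀ k : Fin m, |P k| < lam 0 := by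
        intro k
        by_contra hk
        push_neg at hk
        have h1 : (1 : ℝ≥0∞) ≤
            ((Finset.univ.filter fun k : Fin m => lam 0 ≤ |P k|).card : ℝ≥0∞) := by
          exact Nat.one_le_cast.mpr (Finset.card_pos.mpr
            ⟨k, Finset.mem_filter.mpr ⟨Finset.mem_univ k, hk⟩⟩)
        have h2 : jumpPP (lam 0) f g ω < 1 := by
          refine (hnot 0).trans_le ?_
          rw [hK_def]
          simp only [pow_zero, mul_one]
          rw [h2c]
          exact tsub_le_self
        exact absurd ((h1.trans (hNle (lam 0))).trans_lt h2) (lt_irrefl _).elim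
      -- bound the variation sum
      have hbound : ∑ k : Fin m, ENNReal.ofReal |P k| ^ ϱ ≤ a ^ ϱ := by
        have step1 : ∑ k : Fin m, ENNReal.ofReal |P k| ^ ϱ ≤
            ∑ k : Fin m, ∑' l : ℕ, (if lam (l + 1) ≤ |P k| ∧ |P k| < lam l
              then ENNReal.ofReal (lam l) ^ ϱ else 0) := by
          refine Finset.sum_le_sum fun k _ => ?_
          exact bin_bound hϱ0 hα (abs_nonneg _) (hka k)
        have step2 : ∑ k : Fin m, ∑' l : ℕ, (if lam (l + 1) ≤ |P k| ∧ |P k| < lam l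
              then ENNReal.ofReal (lam l) ^ ϱ else 0)
            = ∑' l : ℕ, ∑ k : Fin m, (if lam (l + 1) ≤ |P k| ∧ |P k| < lam l
              then ENNReal.ofReal (lam l) ^ ϱ else 0) :=
          (Summable.tsum_finsetSum fun _ _ => ENNReal.summable).symm
        have step3 : ∀ l : ℕ, ∑ k : Fin m, (if lam (l + 1) ≤ |P k| ∧ |P k| < lam l
              then ENNReal.ofReal (lam l) ^ ϱ else 0) ≤
              K (l + 1) * ENNReal.ofReal (lam l) ^ ϱ := by
          intro l
          have h3a : ∑ k : Fin m, (if lam (l + 1) ≤ |P k| ∧ |P k| < lam l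
                then ENNReal.ofReal (lam l) ^ ϱ else 0) ≤
              ∑ k : Fin m, (if lam (l + 1) ≤ |P k|
                then ENNReal.ofReal (lam l) ^ ϱ else 0) := by
            refine Finset.sum_le_sum fun k _ => ?_
            split_ifs with h1 h2
            · exact le_rfl
            · exact absurd h1.1 h2
            · exact zero_le
            · exact le_rfl
          have h3b : ∑ k : Fin m, (if lam (l + 1) ≤ |P k|
                then ENNReal.ofReal (lam l) ^ ϱ else 0)
              = ((Finset.univ.filter fun k : Fin m => lam (l + 1) ≤ |P k|).card : ℝ≥0∞) *
                  ENNReal.ofReal (lam l) ^ ϱ := by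
            rw [← Finset.sum_filter, Finset.sum_const, nsmul_eq_mul]
          refine h3a.trans (h3b.le.trans ?_)
          exact mul_le_mul_left ((hNle _).trans (hnot (l + 1)).le) _
        have keyA : ∀ l : ℕ, K (l + 1) * ENNReal.ofReal (lam l) ^ ϱ
            = 2 * c * a ^ ϱ * ρ ^ (l + 1) := by
          intro l
          rw [hlam_eq l, ENNReal.mul_rpow_of_nonneg _ _ hϱ0.le, hK_def]
          simp only []
          rw [two_pow_eq_rpow, ← ENNReal.rpow_neg, ← ENNReal.rpow_mul,
            hT_def, two_rpow_pow, hρ_def, two_rpow_pow]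
          rw [show 2 * c * (2:ℝ≥0∞) ^ ((s + 1) * ((l + 1 : ℕ) : ℝ)) *
              (a ^ ϱ * (2:ℝ≥0∞) ^ (-((l + 1 : ℕ) : ℝ) * ϱ))
            = 2 * c * a ^ ϱ * ((2:ℝ≥0∞) ^ ((s + 1) * ((l + 1 : ℕ) : ℝ)) *
              (2:ℝ≥0∞) ^ (-((l + 1 : ℕ) : ℝ) * ϱ)) from by ring]
          rw [two_rpow_add]
          congr 1
          push_cast
          rw [hs_def]; ring
        have hgeom : ∑' l : ℕ, (2 * c * a ^ ϱ * ρ ^ (l + 1)) ≤ a ^ ϱ := by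
          rw [ENNReal.tsum_mul_left]
          have hρsum : ∑' l : ℕ, ρ ^ (l + 1) = ρ * (1 - ρ)⁻¹ := by
            simp_rw [pow_succ']
            rw [ENNReal.tsum_mul_left, ENNReal.tsum_geometric]
          rw [hρsum]
          calc 2 * c * a ^ ϱ * (ρ * (1 - ρ)⁻¹)
              = ((1 - ρ) * (1 - ρ)⁻¹) * (ρ * a ^ ϱ) := by rw [h2c]; ring
            _ = ρ * a ^ ϱ := by
                rw [ENNReal.mul_inv_cancel h1ρ0 h1ρtop, one_mul]
            _ ≤ a ^ ϱ := mul_le_of_le_one_left zero_le hρ1.le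
        calc ∑ k : Fin m, ENNReal.ofReal |P k| ^ ϱ
            ≤ ∑' l : ℕ, ∑ k : Fin m, (if lam (l + 1) ≤ |P k| ∧ |P k| < lam l
                then ENNReal.ofReal (lam l) ^ ϱ else 0) := step1.trans step2.le
          _ ≤ ∑' l : ℕ, K (l + 1) * ENNReal.ofReal (lam l) ^ ϱ :=
              ENNReal.tsum_le_tsum step3
          _ = ∑' l : ℕ, (2 * c * a ^ ϱ * ρ ^ (l + 1)) := tsum_congr keyA
          _ ≤ a ^ ϱ := hgeom
      exact absurd hS (not_lt.mpr hbound)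
    -- Claim B : Chebyshev + the jump hypothesis on each event
    have hKr0 : ∀ l, K l ^ r ≠ 0 := fun l =>
      (ENNReal.rpow_pos (pos_iff_ne_zero.mpr (hK0 l)) (hKtop l)).ne'
    have hKrtop : ∀ l, K l ^ r ≠ ∞ :=
      fun l => (ENNReal.rpow_lt_top_of_nonneg hr0.le (hKtop l)).ne
    have cheb : ∀ l, μ (E l) ≤ (K l ^ r)⁻¹ * ∫⁻ ω, jumpPP (lam l) f g ω ^ r ∂μ := by
      intro l
      have hmeas : Measurable fun ω => jumpPP (lam l) f g ω ^ r :=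
        (measurable_jumpPP hfm hgm _).pow measurable_const
      have h1 := mul_meas_ge_le_lintegral₀ (μ := μ) hmeas.aemeasurable (K l ^ r)
      have hset : E l = {ω | K l ^ r ≤ jumpPP (lam l) f g ω ^ r} := by
        ext ω
        simp only [hE_def, Set.mem_setOf_eq]
        exact (ENNReal.rpow_le_rpow_iff hr0).symm
      calc μ (E l) = (K l ^ r)⁻¹ * (K l ^ r * μ (E l)) := by
            rw [← mul_assoc, ENNReal.inv_mul_cancel (hKr0 l) (hKrtop l), one_mul]
        _ ≤ (K l ^ r)⁻¹ * ∫⁻ ω, jumpPP (lam l) f g ω ^ r ∂μ := by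
            refine mul_le_mul_right ?_ _
            rw [hset]
            exact h1
    have hint : ∀ l, (∫⁻ ω, jumpPP (lam l) f g ω ^ r ∂μ) ≤
        (C * (ENNReal.ofReal (lam l))⁻¹ * A * B) ^ r := by
      intro l
      have h := hjump Ω μ hμ 𝓕 f g hf hg (lam l) (hlam_pos l)
      have h2 := ENNReal.rpow_le_rpow h hr0.le
      rwa [← ENNReal.rpow_mul, one_div_mul_cancel hr0.ne', ENNReal.rpow_one] at h2
    have ha_r0 : a ^ r ≠ 0 := (ENNReal.rpow_pos (pos_iff_ne_zero.mpr ha0) hatop).ne'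
    have ha_rtop : a ^ r ≠ ∞ := (ENNReal.rpow_lt_top_of_nonneg hr0.le hatop).ne
    have keyB : ∀ l, a ^ r * ((K l ^ r)⁻¹ * (C * (ENNReal.ofReal (lam l))⁻¹ * A * B) ^ r)
        = ((2 : ℝ≥0∞) ^ (r : ℝ) * ((2 * c) ^ r)⁻¹ * ρr ^ l) * (C ^ r * A ^ r * B ^ r) := by
      intro l
      have e0 : (ENNReal.ofReal (lam l))⁻¹ = a⁻¹ * (2 : ℝ≥0∞) ^ (((l + 1 : ℕ) : ℝ)) := by
        rw [hlam_eq l, ENNReal.mul_inv (Or.inl ha0) (Or.inl hatop), inv_inv, two_pow_eq_rpow]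
      have eexp : (C * (a⁻¹ * (2 : ℝ≥0∞) ^ (((l + 1 : ℕ) : ℝ))) * A * B) ^ r
          = C ^ r * ((a ^ r)⁻¹ * (2 : ℝ≥0∞) ^ ((((l + 1 : ℕ) : ℝ)) * r)) * A ^ r * B ^ r := by
        rw [ENNReal.mul_rpow_of_nonneg _ _ hr0.le, ENNReal.mul_rpow_of_nonneg _ _ hr0.le,
          ENNReal.mul_rpow_of_nonneg _ _ hr0.le, ENNReal.mul_rpow_of_nonneg _ _ hr0.le,
          ENNReal.inv_rpow, ← ENNReal.rpow_mul]
      have eK : (K l ^ r)⁻¹ = ((2 * c) ^ r)⁻¹ * (2 : ℝ≥0∞) ^ (-((s + 1) * (l : ℝ) * r)) := by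
        rw [hK_def]
        simp only []
        rw [ENNReal.mul_rpow_of_nonneg _ _ hr0.le, hT_def, two_rpow_pow, ← ENNReal.rpow_mul,
          ENNReal.mul_inv (Or.inl h2cr0) (Or.inl h2crtop), ← ENNReal.rpow_neg,
          ← ENNReal.rpow_neg, ENNReal.rpow_neg, ENNReal.rpow_neg]
      have eρ : ρr ^ l = (2 : ℝ≥0∞) ^ (-(s * r * (l : ℝ))) := by
        rw [hρr_def, hρ_def, ← ENNReal.rpow_mul, two_rpow_pow]
        congr 1; ring
      have merge : (2 : ℝ≥0∞) ^ (-((s + 1) * (l : ℝ) * r)) *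
            (2 : ℝ≥0∞) ^ ((((l + 1 : ℕ) : ℝ)) * r)
          = (2 : ℝ≥0∞) ^ (r : ℝ) * (2 : ℝ≥0∞) ^ (-(s * r * (l : ℝ))) := by
        rw [two_rpow_add, two_rpow_add]
        congr 1
        push_cast
        ring
      rw [e0, eexp, eK, eρ]
      calc a ^ r * (((2 * c) ^ r)⁻¹ * (2 : ℝ≥0∞) ^ (-((s + 1) * (l : ℝ) * r)) *
            (C ^ r * ((a ^ r)⁻¹ * (2 : ℝ≥0∞) ^ ((((l + 1 : ℕ) : ℝ)) * r)) * A ^ r * B ^ r))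
          = (a ^ r * (a ^ r)⁻¹) * ((2 : ℝ≥0∞) ^ (-((s + 1) * (l : ℝ) * r)) *
              (2 : ℝ≥0∞) ^ ((((l + 1 : ℕ) : ℝ)) * r)) *
            (((2 * c) ^ r)⁻¹ * (C ^ r * A ^ r * B ^ r)) := by ring
        _ = 1 * ((2 : ℝ≥0∞) ^ (r : ℝ) * (2 : ℝ≥0∞) ^ (-(s * r * (l : ℝ)))) *
            (((2 * c) ^ r)⁻¹ * (C ^ r * A ^ r * B ^ r)) := by
            rw [ENNReal.mul_inv_cancel ha_r0 ha_rtop, merge]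
        _ = _ := by ring
    calc a ^ r * μ {ω | a < varPP ϱ f g ω}
        ≤ a ^ r * ∑' l, μ (E l) :=
          mul_le_mul_right ((measure_mono hsub).trans (measure_iUnion_le E)) _
      _ = ∑' l, a ^ r * μ (E l) := ENNReal.tsum_mul_left.symm
      _ ≤ ∑' l, a ^ r * ((K l ^ r)⁻¹ * (C * (ENNReal.ofReal (lam l))⁻¹ * A * B) ^ r) :=
          ENNReal.tsum_le_tsum fun l =>
            mul_le_mul_right ((cheb l).trans (mul_le_mul_right (hint l) _)) _
      _ = ∑' l, ((2 : ℝ≥0∞) ^ (r : ℝ) * ((2 * c) ^ r)⁻¹ * ρr ^ l) * (C ^ r * A ^ r * B ^ r) :=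
          tsum_congr keyB
      _ = D * (C ^ r * A ^ r * B ^ r) := by
          rw [ENNReal.tsum_mul_right]
          congr 1
          simp_rw [mul_assoc]
          rw [ENNReal.tsum_mul_left, ENNReal.tsum_mul_left, ENNReal.tsum_geometric,
            hD_def, mul_assoc]
  calc (⨆ (α : ℝ) (_ : 0 < α),
        ENNReal.ofReal α ^ r * μ {ω | ENNReal.ofReal α < varPP ϱ f g ω}) ^ (1 / r)
      ≤ (D * (C ^ r * A ^ r * B ^ r)) ^ (1 / r) :=
        ENNReal.rpow_le_rpow hsup (one_div_nonneg.mpr hr0.le)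
    _ = D ^ (1 / r) * C * A * B := rpow_root_mul hr0 D C A B

end
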